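/- Let K be the kernel of a determinantal point process X on {1,...,n} and let S ⊆ {1,...,n}. Then the particle-hole transform X̃ = (X ∩ S^c) ∪ (X^c ∩ S) is a determinantal point process with kernel K̃ = D(1_S)(I_n − K) + D(1_{S^c})K; that is, for all T ⊆ {1,...,n}, P(T ⊆ X̃) = det(K̃_T). -/

import Mathlib

open Matrix BigOperators Finset

/-- The principal minor of `M` indexed by the subset `S`. -/
noncomputable def pminor {n : ℕ} (M : Matrix (Fin n) (Fin n) ℝ) (S : Finset (Fin n)) : ℝ :=
  (M.submatrix (fun i : {x // x ∈ S} => (i : Fin n)) (fun i : {x // x ∈ S} => (i : Fin n))).det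

/-- The indicator vector of the subset `S`. -/
def indVec {n : ℕ} (S : Finset (Fin n)) : Fin n → ℝ := fun i => if i ∈ S then 1 else 0

namespace PHaux

noncomputable def ph {n : ℕ} (K : Matrix (Fin n) (Fin n) ℝ) (U : Finset (Fin n)) :
    Matrix (Fin n) (Fin n) ℝ :=
  Matrix.diagonal (indVec U) * (1 - K) + Matrix.diagonal (indVec Uᶜ) * K

lemma ph_apply {n : ℕ} (K : Matrix (Fin n) (Fin n) ℝ) (U : Finset (Fin n)) (i j : Fin n) :
    ph K U i j = if i ∈ U then (if i = j then (1:ℝ) else 0) - K i j else K i j := by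
  simp only [ph, Matrix.add_apply, Matrix.diagonal_mul, indVec, Finset.mem_compl,
    Matrix.sub_apply, Matrix.one_apply]
  by_cases h : i ∈ U <;> simp [h]

lemma pminor_congr {n : ℕ} {M N : Matrix (Fin n) (Fin n) ℝ} {T : Finset (Fin n)}
    (h : ∀ i ∈ T, ∀ j ∈ T, M i j = N i j) : pminor M T = pminor N T := by
  unfold pminor
  congr 1
  ext i j
  exact h i i.2 j j.2

lemma sum_pow_card {α : Type*} [DecidableEq α] (x : Finset α) :
    (∑ B ∈ x.powerset, (-1:ℝ)^B.card) = if x = ∅ then 1 else 0 := by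
  have h := Finset.sum_powerset_neg_one_pow_card (x := x)
  have h2 := congrArg (fun z : ℤ => (z : ℝ)) h
  push_cast at h2
  simpa using h2

lemma det_single_row {ι : Type*} [Fintype ι] [DecidableEq ι] (A : Matrix ι ι ℝ) (i₀ : ι)
    (h : ∀ j, A i₀ j = if j = i₀ then 1 else 0) :
    A.det = (A.submatrix (fun x : {x : ι // x ≠ i₀} => (x : ι))
      (fun x : {x : ι // x ≠ i₀} => (x : ι))).det := by
  haveI : Unique {x : ι // ¬ x ≠ i₀} := by
    refine ⟨⟨⟨i₀, by simp⟩⟩, ?_⟩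
    rintro ⟨x, hx⟩
    simp only [ne_eq, not_not] at hx
    subst hx; rfl
  rw [← Matrix.det_submatrix_equiv_self (Equiv.sumCompl (fun x : ι => x ≠ i₀)) A]
  have hb : A.submatrix (Equiv.sumCompl (fun x : ι => x ≠ i₀))
      (Equiv.sumCompl (fun x : ι => x ≠ i₀)) =
      Matrix.fromBlocks
        (A.submatrix (Subtype.val : {x : ι // x ≠ i₀} → ι) Subtype.val)
        (A.submatrix Subtype.val Subtype.val)
        0
        (A.submatrix Subtype.val Subtype.val) := by
    ext i j
    cases i with
    | inl x => cases j <;> rfl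
    | inr x =>
      have hx : (x : ι) = i₀ := not_not.mp x.2
      cases j with
      | inl y =>
        simp only [Matrix.submatrix_apply, Equiv.sumCompl, Equiv.coe_fn_mk, Sum.elim_inl,
          Sum.elim_inr, Matrix.fromBlocks_apply₂₁, Matrix.zero_apply]
        rw [hx, h]
        exact if_neg y.2
      | inr y => rfl
  rw [hb, Matrix.det_fromBlocks_zero₂₁]
  have h22 : (A.submatrix (Subtype.val : {x : ι // ¬ x ≠ i₀} → ι) Subtype.val).det = 1 := by
    rw [Matrix.det_unique]
    have hd : ((default : {x : ι // ¬ x ≠ i₀}) : ι) = i₀ :=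
      not_not.mp (default : {x : ι // ¬ x ≠ i₀}).2
    simp [Matrix.submatrix_apply, hd, h]
  rw [h22, mul_one]

lemma det_submatrix_comp {n : ℕ} (N : Matrix (Fin n) (Fin n) ℝ) {α β : Type*}
    [Fintype α] [Fintype β] [DecidableEq α] [DecidableEq β] (σ : α ≃ β) (g : β → Fin n) :
    (N.submatrix (g ∘ σ) (g ∘ σ)).det = (N.submatrix g g).det := by
  rw [show N.submatrix (g ∘ σ) (g ∘ σ) = (N.submatrix g g).submatrix σ σ from rfl,
    Matrix.det_submatrix_equiv_self]

lemma step {n : ℕ} (K : Matrix (Fin n) (Fin n) ℝ) (U T : Finset (Fin n)) {i : Fin n}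
    (hiT : i ∈ T) (hiU : i ∈ U) :
    pminor (ph K U) T = pminor (ph K U) (T.erase i) - pminor (ph K (U.erase i)) T := by
  classical
  set e : {x // x ∈ T} → Fin n := fun x => (x : Fin n) with he
  set A : Matrix {x // x ∈ T} {x // x ∈ T} ℝ := (ph K U).submatrix e e with hA
  set i₀ : {x // x ∈ T} := ⟨i, hiT⟩ with hi₀
  have hrow : A i₀ = (fun j => if j = i₀ then (1:ℝ) else 0) + (-1 : ℝ) • (fun j => K i (e j)) := by
    funext j
    have : A i₀ j = (if i = e j then (1:ℝ) else 0) - K i (e j) := by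
      rw [hA, Matrix.submatrix_apply, ph_apply, if_pos hiU]
    rw [this]
    have hiff : (i = e j) ↔ (j = i₀) := by
      constructor
      · intro hh; exact Subtype.ext hh.symm
      · intro hh; rw [hh]
    by_cases hj : j = i₀
    · simp [hj, hiff.mpr hj, sub_eq_add_neg]
    · have : ¬ (i = e j) := fun hh => hj (hiff.mp hh)
      simp [hj, this, sub_eq_add_neg]
  have hdet : A.det = (A.updateRow i₀ ((fun j => if j = i₀ then (1:ℝ) else 0)
      + (-1 : ℝ) • (fun j => K i (e j)))).det := by
    rw [← hrow, Matrix.updateRow_eq_self]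
  rw [show pminor (ph K U) T = A.det from rfl, hdet, Matrix.det_updateRow_add,
    Matrix.det_updateRow_smul]
  -- second term
  have hterm2 : A.updateRow i₀ (fun j => K i (e j)) = (ph K (U.erase i)).submatrix e e := by
    ext j k
    by_cases hj : j = i₀
    · subst hj
      rw [Matrix.updateRow_self]
      rw [Matrix.submatrix_apply, ph_apply, if_neg (by rw [Finset.mem_erase]; exact fun hh => hh.1 rfl)]
    · rw [Matrix.updateRow_ne hj, hA, Matrix.submatrix_apply, Matrix.submatrix_apply,
        ph_apply, ph_apply]
      have : (e j ∈ U.erase i) ↔ (e j ∈ U) := by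
        rw [Finset.mem_erase]
        have : e j ≠ i := fun hh => hj (Subtype.ext hh)
        tauto
      by_cases hU : e j ∈ U
      · rw [if_pos hU, if_pos (this.mpr hU)]
      · rw [if_neg hU, if_neg (fun hh => hU (this.mp hh))]
  -- first term
  have hterm1 : (A.updateRow i₀ (fun j => if j = i₀ then (1:ℝ) else 0)).det
      = pminor (ph K U) (T.erase i) := by
    set B := A.updateRow i₀ (fun j => if j = i₀ then (1:ℝ) else 0) with hB
    have hBrow : ∀ j, B i₀ j = if j = i₀ then (1:ℝ) else 0 := by
      intro j; rw [hB, Matrix.updateRow_self]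
    rw [det_single_row B i₀ hBrow]
    have hBsub : B.submatrix (fun x : {x : {x // x ∈ T} // x ≠ i₀} => (x : {x // x ∈ T}))
        (fun x : {x : {x // x ∈ T} // x ≠ i₀} => (x : {x // x ∈ T}))
        = (ph K U).submatrix (fun x : {x : {x // x ∈ T} // x ≠ i₀} => e (x : {x // x ∈ T}))
          (fun x : {x : {x // x ∈ T} // x ≠ i₀} => e (x : {x // x ∈ T})) := by
      ext x y
      rw [Matrix.submatrix_apply, hB, Matrix.updateRow_ne x.2]
      rfl
    rw [hBsub]
    let σ : {x : {x // x ∈ T} // x ≠ i₀} ≃ {x // x ∈ T.erase i} :=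
      { toFun := fun x => ⟨x.1.1, Finset.mem_erase.2
          ⟨fun hh => x.2 (Subtype.ext hh), x.1.2⟩⟩
        invFun := fun y => ⟨⟨y.1, Finset.mem_of_mem_erase y.2⟩,
          fun hh => (Finset.mem_erase.1 y.2).1 (congrArg Subtype.val hh)⟩
        left_inv := fun x => Subtype.ext (Subtype.ext rfl)
        right_inv := fun y => Subtype.ext rfl }
    have : (fun x : {x : {x // x ∈ T} // x ≠ i₀} => e (x : {x // x ∈ T}))
        = (fun y : {x // x ∈ T.erase i} => (y : Fin n)) ∘ σ := by
      funext x; rfl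
    rw [this, det_submatrix_comp]
    rfl
  rw [hterm1, hterm2]
  rw [show ((ph K (U.erase i)).submatrix e e).det = pminor (ph K (U.erase i)) T from rfl]
  ring

lemma key {n : ℕ} (K : Matrix (Fin n) (Fin n) ℝ) (k : ℕ) :
    ∀ (U T : Finset (Fin n)), (T ∩ U).card = k →
      pminor (ph K U) T = ∑ B ∈ (T ∩ U).powerset, (-1:ℝ)^B.card * pminor K ((T \ U) ∪ B) := by
  induction k with
  | zero =>
    intro U T h
    rw [Finset.card_eq_zero] at h
    rw [h, Finset.powerset_empty, Finset.sum_singleton]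
    have hd : Disjoint T U := Finset.disjoint_iff_inter_eq_empty.2 h
    have hTU : T \ U = T := Finset.sdiff_eq_self_of_disjoint hd
    rw [hTU, Finset.union_empty, Finset.card_empty, pow_zero, one_mul]
    apply pminor_congr
    intro i hi j hj
    rw [ph_apply, if_neg]
    intro hiU
    exact (Finset.disjoint_left.1 hd) hi hiU
  | succ k ih =>
    intro U T h
    have hne : (T ∩ U).Nonempty := by
      rw [← Finset.card_pos, h]; omega
    obtain ⟨i, hi⟩ := hne
    have hiT : i ∈ T := (Finset.mem_inter.1 hi).1
    have hiU : i ∈ U := (Finset.mem_inter.1 hi).2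
    have h1 : T.erase i ∩ U = (T ∩ U).erase i := by
      ext x; simp only [Finset.mem_erase, Finset.mem_inter]; tauto
    have h2 : T ∩ U.erase i = (T ∩ U).erase i := by
      ext x; simp only [Finset.mem_erase, Finset.mem_inter]; tauto
    have h3 : T.erase i \ U = T \ U := by
      ext x
      simp only [Finset.mem_sdiff, Finset.mem_erase]
      constructor
      · rintro ⟨⟨_, hx⟩, hxU⟩; exact ⟨hx, hxU⟩
      · rintro ⟨hx, hxU⟩; exact ⟨⟨fun hh => hxU (hh ▸ hiU), hx⟩, hxU⟩
    have h4 : T \ U.erase i = insert i (T \ U) := by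
      ext x
      simp only [Finset.mem_sdiff, Finset.mem_erase, Finset.mem_insert]
      constructor
      · rintro ⟨hx, hxU⟩
        by_cases hxi : x = i
        · exact Or.inl hxi
        · exact Or.inr ⟨hx, fun hh => hxU ⟨hxi, hh⟩⟩
      · rintro (rfl | ⟨hx, hxU⟩)
        · exact ⟨hiT, fun hh => hh.1 rfl⟩
        · exact ⟨hx, fun hh => hxU hh.2⟩
    rw [step K U T hiT hiU,
      ih U (T.erase i) (by rw [h1, Finset.card_erase_of_mem hi, h]; omega),
      ih (U.erase i) T (by rw [h2, Finset.card_erase_of_mem hi, h]; omega),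
      show T ∩ U = insert i ((T ∩ U).erase i) from (Finset.insert_erase hi).symm,
      Finset.sum_powerset_insert (Finset.notMem_erase i _), h1, h2, h3, h4]
    have hsum2 : ∑ B ∈ ((T ∩ U).erase i).powerset,
        (-1:ℝ)^(insert i B).card * pminor K ((T \ U) ∪ insert i B)
        = ∑ B ∈ ((T ∩ U).erase i).powerset,
          -((-1:ℝ)^B.card * pminor K (insert i (T \ U) ∪ B)) := by
      apply Finset.sum_congr rfl
      intro B hB
      have hiB : i ∉ B := fun hh =>
        (Finset.notMem_erase i (T ∩ U)) ((Finset.mem_powerset.1 hB) hh)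
      rw [Finset.card_insert_of_notMem hiB, pow_succ]
      have : (T \ U) ∪ insert i B = insert i (T \ U) ∪ B := by
        rw [Finset.union_insert, Finset.insert_union]
      rw [this]
      ring
    rw [hsum2, Finset.sum_neg_distrib]
    ring

end PHaux

open PHaux in
theorem particle_hole_transform {n : ℕ} (K : Matrix (Fin n) (Fin n) ℝ)
    (μ : Finset (Fin n) → ℝ) (hpos : ∀ A, 0 ≤ μ A)
    (hdpp : ∀ T : Finset (Fin n),
      ∑ A ∈ Finset.univ.filter (fun A : Finset (Fin n) => T ⊆ A), μ A = pminor K T)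
    (S : Finset (Fin n)) (T : Finset (Fin n)) :
    ∑ A ∈ Finset.univ.filter (fun A : Finset (Fin n) => T ⊆ (A \ S) ∪ (S \ A)), μ A
      = pminor (Matrix.diagonal (indVec S) * (1 - K) + Matrix.diagonal (indVec Sᶜ) * K) T := by
  classical
  have hRHS : pminor (Matrix.diagonal (indVec S) * (1 - K) + Matrix.diagonal (indVec Sᶜ) * K) T
      = ∑ B ∈ (T ∩ S).powerset, (-1:ℝ)^B.card * pminor K ((T \ S) ∪ B) :=
    key K (T ∩ S).card S T rfl
  rw [hRHS, Finset.sum_filter]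
  have hpt : ∀ A : Finset (Fin n),
      (if T ⊆ (A \ S) ∪ (S \ A) then μ A else 0)
      = ∑ B ∈ (T ∩ S).powerset, (-1:ℝ)^B.card * (if (T \ S) ∪ B ⊆ A then μ A else 0) := by
    intro A
    have hcond : T ⊆ (A \ S) ∪ (S \ A) ↔ (T \ S ⊆ A ∧ (T ∩ S) ∩ A = ∅) := by
      constructor
      · intro h
        constructor
        · intro x hx
          have hx' := Finset.mem_sdiff.1 hx
          rcases Finset.mem_union.1 (h hx'.1) with hh | hh
          · exact (Finset.mem_sdiff.1 hh).1
          · exact absurd (Finset.mem_sdiff.1 hh).1 hx'.2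
        · rw [Finset.eq_empty_iff_forall_notMem]
          intro x hx
          have h1 := Finset.mem_inter.1 (Finset.mem_inter.1 hx).1
          have h2 := (Finset.mem_inter.1 hx).2
          rcases Finset.mem_union.1 (h h1.1) with hh | hh
          · exact (Finset.mem_sdiff.1 hh).2 h1.2
          · exact (Finset.mem_sdiff.1 hh).2 h2
      · rintro ⟨h1, h2⟩ x hx
        by_cases hxS : x ∈ S
        · have hxA : x ∉ A := by
            intro hxA
            have : x ∈ (T ∩ S) ∩ A := Finset.mem_inter.2 ⟨Finset.mem_inter.2 ⟨hx, hxS⟩, hxA⟩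
            rw [h2] at this
            exact Finset.notMem_empty x this
          exact Finset.mem_union.2 (Or.inr (Finset.mem_sdiff.2 ⟨hxS, hxA⟩))
        · have : x ∈ A := h1 (Finset.mem_sdiff.2 ⟨hx, hxS⟩)
          exact Finset.mem_union.2 (Or.inl (Finset.mem_sdiff.2 ⟨this, hxS⟩))
    by_cases hTS : T \ S ⊆ A
    · have hterm : ∀ B ∈ (T ∩ S).powerset,
          (-1:ℝ)^B.card * (if (T \ S) ∪ B ⊆ A then μ A else 0)
          = (-1:ℝ)^B.card * (if B ⊆ A then μ A else 0) := by
        intro B _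
        have hcc : ((T \ S) ∪ B ⊆ A) = (B ⊆ A) := by
          rw [eq_iff_iff, Finset.union_subset_iff]
          simp [hTS]
        simp only [hcc]
      rw [Finset.sum_congr rfl hterm]
      have hsmall : ∑ B ∈ ((T ∩ S) ∩ A).powerset, (-1:ℝ)^B.card * (if B ⊆ A then μ A else 0)
          = ∑ B ∈ (T ∩ S).powerset, (-1:ℝ)^B.card * (if B ⊆ A then μ A else 0) := by
        apply Finset.sum_subset
        · exact Finset.powerset_mono.2 Finset.inter_subset_left
        · intro B hB hB'
          have hBTS : B ⊆ T ∩ S := Finset.mem_powerset.1 hB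
          have : ¬ B ⊆ A := by
            intro hBA
            exact hB' (Finset.mem_powerset.2 (Finset.subset_inter hBTS hBA))
          rw [if_neg this, mul_zero]
      rw [← hsmall]
      have hin : ∀ B ∈ ((T ∩ S) ∩ A).powerset,
          (-1:ℝ)^B.card * (if B ⊆ A then μ A else 0) = (-1:ℝ)^B.card * μ A := by
        intro B hB
        rw [if_pos ((Finset.mem_powerset.1 hB).trans Finset.inter_subset_right)]
      rw [Finset.sum_congr rfl hin, ← Finset.sum_mul, sum_pow_card]
      by_cases hemp : (T ∩ S) ∩ A = ∅
      · rw [if_pos hemp, one_mul, if_pos (hcond.2 ⟨hTS, hemp⟩)]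
      · rw [if_neg hemp, zero_mul, if_neg (fun hh => hemp (hcond.1 hh).2)]
    · have hterm : ∀ B ∈ (T ∩ S).powerset,
          (-1:ℝ)^B.card * (if (T \ S) ∪ B ⊆ A then μ A else 0) = 0 := by
        intro B _
        rw [if_neg, mul_zero]
        intro hh
        exact hTS (Finset.union_subset_iff.1 hh).1
      rw [Finset.sum_congr rfl hterm, Finset.sum_const_zero, if_neg]
      intro hh
      exact hTS (hcond.1 hh).1
  rw [Finset.sum_congr rfl (fun A _ => hpt A), Finset.sum_comm]
  apply Finset.sum_congr rfl
  intro B _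
  rw [← Finset.mul_sum, ← Finset.sum_filter, hdpp]
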